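/- Let f : GL(d,ℝ)^k → ℝ be an invariant function with variation functions F₁,…,F_k. Then for every (g₁,…,g_k) ∈ GL(d,ℝ)^k one has Σ_{i=1}^{k} F_i(g₁,…,g_k) = Σ_{i=1}^{k} g_i⁻¹·F_i(g₁,…,g_k)·g_i. (This is the cycle condition ensuring that the chain Σ_i α_i ⊗ F_i(ρ(ᾱ)) representing the Poincaré dual of the Hamiltonian vector field of f_ᾱ is a 1-cycle; it follows by differentiating the invariance of f under simultaneous conjugation by exp(tX).) -/

import Mathlib

open Matrix

attribute [local instance] Matrix.normedAddCommGroup Matrix.normedSpace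

noncomputable section

open NormedSpace

variable {d : ℕ}

private lemma comp_entry_deriv {E : Type*} [NormedAddCommGroup E] [NormedSpace ℝ E]
    [FiniteDimensional ℝ E] {c : ℝ → E} {D : E} (h : HasDerivAt c D 0) (l : E →ₗ[ℝ] ℝ) :
    HasDerivAt (fun t => l (c t)) (l D) 0 :=
  (LinearMap.toContinuousLinearMap l).hasFDerivAt.comp_hasDerivAt 0 h

private def entryL (d : ℕ) (i j : Fin d) : Matrix (Fin d) (Fin d) ℝ →ₗ[ℝ] ℝ :=
  (LinearMap.proj j).comp (LinearMap.proj (R := ℝ) (φ := fun _ : Fin d => Fin d → ℝ) i)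

private lemma aux_conj_deriv (X A : Matrix (Fin d) (Fin d) ℝ) :
    HasDerivAt (fun t : ℝ => exp (t • X) * A * exp (t • (-X))) (X * A - A * X) 0 := by
  apply hasDerivAt_pi.mpr; intro i; apply hasDerivAt_pi.mpr; intro j
  letI : NormedRing (Matrix (Fin d) (Fin d) ℝ) := Matrix.linftyOpNormedRing
  letI : NormedAlgebra ℝ (Matrix (Fin d) (Fin d) ℝ) := Matrix.linftyOpNormedAlgebra
  have h := (((@hasDerivAt_exp_smul_const ℝ _ _ _ _ (FiniteDimensional.complete ℝ _) X (0:ℝ)).mul_const A).mul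
    (@hasDerivAt_exp_smul_const ℝ _ _ _ _ (FiniteDimensional.complete ℝ _) (-X) (0:ℝ)))
  simp only [zero_smul, exp_zero, one_mul, mul_one, mul_neg] at h
  rw [show X * A + -(A * X) = X * A - A * X from (sub_eq_add_neg _ _).symm] at h
  exact @comp_entry_deriv (Matrix (Fin d) (Fin d) ℝ) NonUnitalNormedRing.toNormedAddCommGroup (NormedAlgebra.toNormedSpace _)
    (by infer_instance) _ _ h (entryL d i j)

private lemma aux_mul_deriv (X A : Matrix (Fin d) (Fin d) ℝ) :
    HasDerivAt (fun t : ℝ => exp (t • X) * A) (X * A) 0 := by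
  apply hasDerivAt_pi.mpr; intro i; apply hasDerivAt_pi.mpr; intro j
  letI : NormedRing (Matrix (Fin d) (Fin d) ℝ) := Matrix.linftyOpNormedRing
  letI : NormedAlgebra ℝ (Matrix (Fin d) (Fin d) ℝ) := Matrix.linftyOpNormedAlgebra
  have h := (@hasDerivAt_exp_smul_const ℝ _ _ _ _ (FiniteDimensional.complete ℝ _) X (0:ℝ)).mul_const A
  simp only [zero_smul, exp_zero, one_mul] at h
  exact @comp_entry_deriv (Matrix (Fin d) (Fin d) ℝ) NonUnitalNormedRing.toNormedAddCommGroup (NormedAlgebra.toNormedSpace _)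
    (by infer_instance) _ _ h (entryL d i j)

private lemma aux_trace_nondeg (M : Matrix (Fin d) (Fin d) ℝ)
    (h : ∀ X, Matrix.trace (M * X) = 0) : M = 0 := by
  ext i j
  have := h (Matrix.single j i 1)
  simpa [Matrix.trace, Matrix.diag, Matrix.mul_apply, Matrix.single, ite_and] using this


/-- An invariant multi-function on `GL(d,ℝ)^k`: a real-valued function on `k`-tuples of
`d × d` real matrices that is differentiable on the open set of tuples of invertible
matrices and invariant under the diagonal action of `GL(d,ℝ)` by conjugation. -/
def IsInvariantFun (d k : ℕ) (f : (Fin k → Matrix (Fin d) (Fin d) ℝ) → ℝ) : Prop :=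
  DifferentiableOn ℝ f {g : Fin k → Matrix (Fin d) (Fin d) ℝ | ∀ i, IsUnit (g i)} ∧
  ∀ h : Matrix (Fin d) (Fin d) ℝ, IsUnit h →
    ∀ g : Fin k → Matrix (Fin d) (Fin d) ℝ, (∀ i, IsUnit (g i)) →
      f (fun i => h * g i * h⁻¹) = f g

/-- `F` is the tuple of variation functions of `f` with respect to the trace form
`𝔅(X,Y) = tr (X*Y)`: the matrix `F j g` satisfies that `tr (F j g * X)` is the derivative
at `t = 0` of `t ↦ f (g₁, …, exp(tX)·g_j, …, g_k)`, for every `X`. -/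
def IsVariationFun (d k : ℕ) (f : (Fin k → Matrix (Fin d) (Fin d) ℝ) → ℝ)
    (F : Fin k → (Fin k → Matrix (Fin d) (Fin d) ℝ) → Matrix (Fin d) (Fin d) ℝ) : Prop :=
  ∀ (j : Fin k) (g : Fin k → Matrix (Fin d) (Fin d) ℝ), (∀ i, IsUnit (g i)) →
    ∀ X : Matrix (Fin d) (Fin d) ℝ,
      HasDerivAt
        (fun t : ℝ => f (Function.update g j (NormedSpace.exp (t • X) * g j)))
        (Matrix.trace (F j g * X)) 0

/-- the cycle condition for the variation functions of an invariant
function: `Σ_i F_i g = Σ_i g_i⁻¹ · F_i g · g_i`. -/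
theorem variation_functions_cycle_condition (d k : ℕ)
    (f : (Fin k → Matrix (Fin d) (Fin d) ℝ) → ℝ)
    (F : Fin k → (Fin k → Matrix (Fin d) (Fin d) ℝ) → Matrix (Fin d) (Fin d) ℝ)
    (hf : IsInvariantFun d k f) (hF : IsVariationFun d k f F)
    (g : Fin k → Matrix (Fin d) (Fin d) ℝ) (hg : ∀ i, IsUnit (g i)) :
    ∑ i, F i g = ∑ i, (g i)⁻¹ * F i g * g i := by
  obtain ⟨hdiff, hinv⟩ := hf
  -- the set of invertible tuples is open
  have hopen : IsOpen {g : Fin k → Matrix (Fin d) (Fin d) ℝ | ∀ i, IsUnit (g i)} := by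
    have hset : {g : Fin k → Matrix (Fin d) (Fin d) ℝ | ∀ i, IsUnit (g i)}
        = ⋂ i, (fun g : Fin k → Matrix (Fin d) (Fin d) ℝ => (g i).det) ⁻¹' {(0:ℝ)}ᶜ := by
      ext x
      simp [Matrix.isUnit_iff_isUnit_det, isUnit_iff_ne_zero]
    rw [hset]
    exact isOpen_iInter_of_finite fun i =>
      (isOpen_compl_singleton).preimage ((continuous_apply i).matrix_det)
  have hdAt : DifferentiableAt ℝ f g := (hdiff g hg).differentiableAt (hopen.mem_nhds hg)
  have hfd : HasFDerivAt f (fderiv ℝ f g) g := hdAt.hasFDerivAt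
  set φ := fderiv ℝ f g with hφ
  -- partial derivatives in terms of the variation functions
  have upd : ∀ (j : Fin k) (X : Matrix (Fin d) (Fin d) ℝ),
      φ (Pi.single j (X * g j)) = Matrix.trace (F j g * X) := by
    intro j X
    have hc : HasDerivAt (fun t : ℝ => Function.update g j (exp (t • X) * g j))
        (Pi.single j (X * g j)) 0 := by
      apply hasDerivAt_pi.mpr
      intro i
      rcases eq_or_ne i j with rfl | hij
      · have := aux_mul_deriv X (g i)
        simp only [Function.update_self, Pi.single_eq_same]
        exact this
      · simpa [Function.update_of_ne hij, Pi.single_eq_of_ne hij] using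
          hasDerivAt_const (0:ℝ) (g i)
    have hc0 : Function.update g j (exp ((0:ℝ) • X) * g j) = g := by
      simp [zero_smul, exp_zero, Function.update_eq_self]
    have h1 := (hc0 ▸ hfd).comp_hasDerivAt 0 hc
    exact h1.unique (hF j g hg X)
  have key : ∀ (j : Fin k) (Z : Matrix (Fin d) (Fin d) ℝ),
      φ (Pi.single j Z) = Matrix.trace (F j g * (Z * (g j)⁻¹)) := by
    intro j Z
    have := upd j (Z * (g j)⁻¹)
    rwa [Matrix.nonsing_inv_mul_cancel_right _ _
      ((Matrix.isUnit_iff_isUnit_det _).mp (hg j))] at this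
  -- differentiating the invariance relation along the conjugation flow
  have conj : ∀ X : Matrix (Fin d) (Fin d) ℝ,
      φ (fun i => X * g i - g i * X) = 0 := by
    intro X
    have hc : HasDerivAt
        (fun t : ℝ => fun i => exp (t • X) * g i * exp (t • (-X)))
        (fun i => X * g i - g i * X) 0 :=
      hasDerivAt_pi.mpr fun i => aux_conj_deriv X (g i)
    have hc0 : (fun i => exp ((0:ℝ) • X) * g i * exp ((0:ℝ) • (-X))) = g := by
      funext i
      simp [zero_smul, exp_zero]
    have h1 := (hc0 ▸ hfd).comp_hasDerivAt 0 hc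
    have h2 : (fun t : ℝ => f (fun i => exp (t • X) * g i * exp (t • (-X))))
        = fun _ => f g := by
      funext t
      have hexp : exp (t • (-X)) = (exp (t • X))⁻¹ := by
        rw [smul_neg, Matrix.exp_neg]
      rw [hexp]
      exact hinv _ (Matrix.isUnit_exp _) g hg
    have h3 : HasDerivAt
        (fun t : ℝ => f (fun i => exp (t • X) * g i * exp (t • (-X)))) 0 0 := by
      rw [h2]; exact hasDerivAt_const _ _
    exact (h3.unique h1).symm
  -- conclude via nondegeneracy of the trace form
  have hzero : (∑ i, F i g) - ∑ i, (g i)⁻¹ * F i g * g i = 0 := by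
    apply aux_trace_nondeg
    intro X
    have hsplit : (fun i => X * g i - g i * X)
        = ∑ j : Fin k, Pi.single j (X * g j - g j * X) := by
      rw [Finset.univ_sum_single (fun j => X * g j - g j * X)]
    have h0 := conj X
    rw [hsplit, map_sum] at h0
    have hterm : ∀ j : Fin k, φ (Pi.single j (X * g j - g j * X))
        = Matrix.trace (F j g * X) - Matrix.trace (((g j)⁻¹ * F j g * g j) * X) := by
      intro j
      rw [key j]
      have hu := (Matrix.isUnit_iff_isUnit_det (g j)).mp (hg j)
      rw [Matrix.sub_mul, Matrix.mul_sub, Matrix.trace_sub,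
        Matrix.mul_nonsing_inv_cancel_right _ _ hu]
      congr 1
      rw [show F j g * (g j * X * (g j)⁻¹) = (F j g * g j * X) * (g j)⁻¹ by
        noncomm_ring]
      rw [Matrix.trace_mul_comm (F j g * g j * X) ((g j)⁻¹)]
      noncomm_ring
    rw [Finset.sum_congr rfl fun j _ => hterm j] at h0
    rw [Matrix.sub_mul, Matrix.trace_sub, Finset.sum_mul, Finset.sum_mul,
      Matrix.trace_sum, Matrix.trace_sum]
    rw [Finset.sum_sub_distrib] at h0
    exact h0
  rw [sub_eq_zero] at hzero
  exact hzero
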